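/- arXiv:math/0401044 — 5 statements merged into one kernel-verified Lean document; each statement's English description precedes it below -/
import Mathlib

section
/- Let α₀ be irrational with convergent p_n/q_n, q_n ≥ 2, and let p'/q' be a rational with q' < q_n. Suppose a complex number α lies in the open disk of radius (log 2)/(2π q') ≤ 1/(8q') tangent to the real axis at p'/q' (from either side). Then |α − α₀| ≥ 1/(2 q_n³). -/
/-- The Gauss map iteration: `gaussSeq α 0 = frac α`, `gaussSeq α (n+1) = frac (1 / gaussSeq α n)`. -/
noncomputable def gaussSeq (α : ℝ) : ℕ → ℝ
  | 0 => Int.fract α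
  | n + 1 => Int.fract (1 / gaussSeq α n)

/-- The partial quotients of the continued fraction expansion of `α`:
`a₀ = ⌊α⌋` and `a_{n+1} = ⌊1/α_n⌋`. -/
noncomputable def aSeq (α : ℝ) : ℕ → ℤ
  | 0 => ⌊α⌋
  | n + 1 => ⌊1 / gaussSeq α n⌋

/-- The denominators `q_n` of the continued fraction convergents of `α`:
`q₀ = 1`, `q₁ = a₁`, `q_{n+2} = a_{n+2} q_{n+1} + q_n`. -/
noncomputable def qSeq (α : ℝ) : ℕ → ℤ
  | 0 => 1
  | 1 => aSeq α 1
  | n + 2 => aSeq α (n + 2) * qSeq α (n + 1) + qSeq α n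

/-- The numerators `p_n` of the continued fraction convergents of `α`:
`p₀ = a₀`, `p₁ = a₁ a₀ + 1`, `p_{n+2} = a_{n+2} p_{n+1} + p_n`. -/
noncomputable def pSeq (α : ℝ) : ℕ → ℤ
  | 0 => aSeq α 0
  | 1 => aSeq α 1 * aSeq α 0 + 1
  | n + 2 => aSeq α (n + 2) * pSeq α (n + 1) + pSeq α n

variable {α₀ : ℝ}

lemma gauss_irr (hirr : Irrational α₀) : ∀ n, Irrational (gaussSeq α₀ n)
  | 0 => by
      rw [gaussSeq, Int.fract]
      exact hirr.sub_intCast ⌊α₀⌋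
  | (n+1) => by
      have h := gauss_irr hirr n
      have h2 : Irrational (1 / gaussSeq α₀ n) := by
        simpa [one_div] using h.inv
      rw [gaussSeq, Int.fract]
      exact h2.sub_intCast _

lemma gauss_pos (hirr : Irrational α₀) (n : ℕ) :
    0 < gaussSeq α₀ n ∧ gaussSeq α₀ n < 1 := by
  have h := gauss_irr hirr n
  have h0 : gaussSeq α₀ n ≠ 0 := by
    intro he; rw [he] at h; exact h.ne_int 0 (by norm_num)
  cases n with
  | zero => exact ⟨lt_of_le_of_ne (Int.fract_nonneg _) (Ne.symm h0), Int.fract_lt_one _⟩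
  | succ m => exact ⟨lt_of_le_of_ne (Int.fract_nonneg _) (Ne.symm h0), Int.fract_lt_one _⟩

lemma aSeq_pos (hirr : Irrational α₀) (n : ℕ) : 1 ≤ aSeq α₀ (n + 1) := by
  have h := gauss_pos hirr n
  have : (1:ℝ) ≤ 1 / gaussSeq α₀ n := by
    rw [le_div_iff₀ h.1]; nlinarith [h.2]
  show (1:ℤ) ≤ ⌊1 / gaussSeq α₀ n⌋
  exact_mod_cast Int.le_floor.2 (by exact_mod_cast this)

lemma qSeq_pos (hirr : Irrational α₀) : ∀ n, 1 ≤ qSeq α₀ n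
  | 0 => le_refl 1
  | 1 => aSeq_pos hirr 0
  | (n+2) => by
      have h1 := qSeq_pos hirr (n+1)
      have h2 := qSeq_pos hirr n
      have h3 := aSeq_pos hirr (n+1)
      show 1 ≤ aSeq α₀ (n + 2) * qSeq α₀ (n + 1) + qSeq α₀ n
      nlinarith

lemma qSeq_mono (hirr : Irrational α₀) : ∀ n, qSeq α₀ n ≤ qSeq α₀ (n + 1)
  | 0 => by simpa [qSeq] using aSeq_pos hirr 0
  | (n+1) => by
      have h1 := qSeq_pos hirr (n+1)
      have h2 := qSeq_pos hirr n
      have h3 := aSeq_pos hirr (n+1)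
      show qSeq α₀ (n+1) ≤ aSeq α₀ (n + 2) * qSeq α₀ (n + 1) + qSeq α₀ n
      nlinarith

noncomputable def dSeq (α : ℝ) (n : ℕ) : ℝ := (qSeq α n : ℝ) * α - (pSeq α n : ℝ)

lemma dSeq_rec (hirr : Irrational α₀) :
    ∀ n, dSeq α₀ (n+1) = -(gaussSeq α₀ (n+1)) * dSeq α₀ n
  | 0 => by
      have hb := (gauss_pos hirr 0).1
      have e0 : gaussSeq α₀ 0 = Int.fract α₀ := rfl
      rw [e0] at hb
      have hbne : Int.fract α₀ ≠ 0 := ne_of_gt hb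
      show dSeq α₀ 1 = -(gaussSeq α₀ 1) * dSeq α₀ 0
      have d0 : dSeq α₀ 0 = Int.fract α₀ := by
        unfold dSeq
        rw [show qSeq α₀ 0 = 1 from rfl, show pSeq α₀ 0 = ⌊α₀⌋ from rfl,
          ← Int.self_sub_floor]
        push_cast; ring
      have d1 : dSeq α₀ 1 = (⌊1 / Int.fract α₀⌋ : ℝ) * Int.fract α₀ - 1 := by
        unfold dSeq
        rw [show qSeq α₀ 1 = aSeq α₀ 1 from rfl,
          show pSeq α₀ 1 = aSeq α₀ 1 * aSeq α₀ 0 + 1 from rfl,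
          show aSeq α₀ 1 = ⌊1 / Int.fract α₀⌋ from rfl,
          show aSeq α₀ 0 = ⌊α₀⌋ from rfl]
        push_cast
        linear_combination (⌊1 / Int.fract α₀⌋ : ℝ) * (Int.self_sub_floor α₀)
      have e1 : gaussSeq α₀ 1 = 1 / Int.fract α₀ - (⌊1 / Int.fract α₀⌋ : ℝ) := by
        show Int.fract (1 / gaussSeq α₀ 0) = _
        rw [e0, ← Int.self_sub_floor]
      rw [d0, d1, e1]
      field_simp
      ring
  | (n+1) => by
      have ih := dSeq_rec hirr n
      have hb := (gauss_pos hirr (n+1)).1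
      have hbne : gaussSeq α₀ (n+1) ≠ 0 := ne_of_gt hb
      have h2 : gaussSeq α₀ (n+2)
          = 1 / gaussSeq α₀ (n+1) - (⌊1 / gaussSeq α₀ (n+1)⌋ : ℝ) := by
        show Int.fract (1 / gaussSeq α₀ (n+1)) = _
        rw [← Int.self_sub_floor]
      have hq : qSeq α₀ (n+2) = aSeq α₀ (n+2) * qSeq α₀ (n+1) + qSeq α₀ n := rfl
      have hp : pSeq α₀ (n+2) = aSeq α₀ (n+2) * pSeq α₀ (n+1) + pSeq α₀ n := rfl
      have ha : aSeq α₀ (n+2) = ⌊1 / gaussSeq α₀ (n+1)⌋ := rfl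
      have hDn : dSeq α₀ n = -(1 / gaussSeq α₀ (n+1)) * dSeq α₀ (n+1) := by
        rw [ih]; field_simp
      show dSeq α₀ (n+2) = -(gaussSeq α₀ (n+2)) * dSeq α₀ (n+1)
      have expand : dSeq α₀ (n+2)
          = (aSeq α₀ (n+2) : ℝ) * dSeq α₀ (n+1) + dSeq α₀ n := by
        unfold dSeq; rw [hq, hp]; push_cast; ring
      rw [expand, hDn, h2, ha]
      ring

lemma dSeq_sign (hirr : Irrational α₀) : ∀ n, 0 < (-1 : ℝ)^n * dSeq α₀ n
  | 0 => by
      have hb := (gauss_pos hirr 0).1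
      have h0 : gaussSeq α₀ 0 = α₀ - (⌊α₀⌋ : ℝ) := rfl
      have : dSeq α₀ 0 = α₀ - (⌊α₀⌋ : ℝ) := by
        unfold dSeq
        rw [show qSeq α₀ 0 = 1 from rfl, show pSeq α₀ 0 = aSeq α₀ 0 from rfl,
          show aSeq α₀ 0 = ⌊α₀⌋ from rfl]
        push_cast; ring
      rw [h0] at hb; simpa [this] using hb
  | (n+1) => by
      have ih := dSeq_sign hirr n
      have hb := (gauss_pos hirr (n+1)).1
      rw [dSeq_rec hirr n]
      have : (-1 : ℝ)^(n+1) * (-(gaussSeq α₀ (n+1)) * dSeq α₀ n)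
          = gaussSeq α₀ (n+1) * ((-1:ℝ)^n * dSeq α₀ n) := by ring
      rw [this]
      positivity

lemma dSeq_dec (hirr : Irrational α₀) (n : ℕ) :
    |dSeq α₀ (n+1)| < |dSeq α₀ n| := by
  have h := gauss_pos hirr (n+1)
  have hne : dSeq α₀ n ≠ 0 := by
    have := dSeq_sign hirr n
    intro he; rw [he] at this; simp at this
  rw [dSeq_rec hirr n, abs_mul, abs_neg, abs_of_pos h.1]
  have : 0 < |dSeq α₀ n| := abs_pos.2 hne
  nlinarith [h.2]

lemma det_eq (hirr : Irrational α₀) :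
    ∀ n, pSeq α₀ (n+1) * qSeq α₀ n - pSeq α₀ n * qSeq α₀ (n+1) = (-1)^n
  | 0 => by
      rw [show qSeq α₀ 1 = aSeq α₀ 1 from rfl,
          show pSeq α₀ 1 = aSeq α₀ 1 * aSeq α₀ 0 + 1 from rfl,
          show qSeq α₀ 0 = 1 from rfl, show pSeq α₀ 0 = aSeq α₀ 0 from rfl]
      ring
  | (n+1) => by
      have ih := det_eq hirr n
      rw [show qSeq α₀ (n+2) = aSeq α₀ (n+2) * qSeq α₀ (n+1) + qSeq α₀ n from rfl,
          show pSeq α₀ (n+2) = aSeq α₀ (n+2) * pSeq α₀ (n+1) + pSeq α₀ n from rfl]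
      rw [pow_succ]
      linear_combination (-1 : ℤ) * ih

lemma dSeq_lower (hirr : Irrational α₀) (n : ℕ) :
    1 / (2 * (qSeq α₀ (n+1) : ℝ)) ≤ (-1:ℝ)^n * dSeq α₀ n := by
  have hdet := det_eq hirr n
  have hdetR : ((pSeq α₀ (n+1) : ℝ)) * (qSeq α₀ n : ℝ)
      - (pSeq α₀ n : ℝ) * (qSeq α₀ (n+1) : ℝ) = (-1:ℝ)^n := by
    exact_mod_cast congrArg (fun z : ℤ => (z : ℝ)) hdet
  have hid : (qSeq α₀ (n+1) : ℝ) * dSeq α₀ n - (qSeq α₀ n : ℝ) * dSeq α₀ (n+1)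
      = (-1:ℝ)^n := by
    unfold dSeq; linear_combination hdetR
  have hApos : 0 < (-1:ℝ)^n * dSeq α₀ n := dSeq_sign hirr n
  have hBpos : 0 < (-1:ℝ)^(n+1) * dSeq α₀ (n+1) := dSeq_sign hirr (n+1)
  have hsq : ((-1:ℝ)^n) * ((-1:ℝ)^n) = 1 := by
    rw [← pow_add]; exact Even.neg_one_pow ⟨n, rfl⟩
  have hp1 : ((-1:ℝ)^(n+1)) = -((-1:ℝ)^n) := by rw [pow_succ]; ring
  have h2 : ((-1:ℝ)^n) * ((qSeq α₀ (n+1):ℝ) * dSeq α₀ n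
      - (qSeq α₀ n:ℝ) * dSeq α₀ (n+1)) = ((-1:ℝ)^n) * ((-1:ℝ)^n) := by
    linear_combination ((-1:ℝ)^n) * hid
  have h1 : (qSeq α₀ (n+1):ℝ) * ((-1:ℝ)^n * dSeq α₀ n)
      + (qSeq α₀ n : ℝ) * ((-1:ℝ)^(n+1) * dSeq α₀ (n+1)) = 1 := by
    rw [hp1]; linear_combination h2 + hsq
  have hq1 : (1:ℝ) ≤ (qSeq α₀ n : ℝ) := by exact_mod_cast qSeq_pos hirr n
  have hq2 : (qSeq α₀ n : ℝ) ≤ (qSeq α₀ (n+1) : ℝ) := by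
    exact_mod_cast qSeq_mono hirr n
  have habs : ∀ m, |dSeq α₀ m| = (-1:ℝ)^m * dSeq α₀ m := by
    intro m
    have h := dSeq_sign hirr m
    rcases Nat.even_or_odd m with he | ho
    · rw [he.neg_one_pow, one_mul] at h ⊢; exact abs_of_pos h
    · rw [ho.neg_one_pow, neg_one_mul] at h ⊢; exact abs_of_neg (by linarith)
  have hBA : (-1:ℝ)^(n+1) * dSeq α₀ (n+1) ≤ (-1:ℝ)^n * dSeq α₀ n := by
    have h3 := dSeq_dec hirr n
    rw [habs n, habs (n+1)] at h3
    linarith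
  have hq1pos : (0:ℝ) < (qSeq α₀ (n+1) : ℝ) := by linarith
  rw [div_le_iff₀ (by positivity)]
  nlinarith

lemma dSeq_abs (hirr : Irrational α₀) (m : ℕ) :
    |dSeq α₀ m| = (-1:ℝ)^m * dSeq α₀ m := by
  have h := dSeq_sign hirr m
  rcases Nat.even_or_odd m with he | ho
  · rw [he.neg_one_pow, one_mul] at h ⊢; exact abs_of_pos h
  · rw [ho.neg_one_pow, neg_one_mul] at h ⊢; exact abs_of_neg (by linarith)

lemma best_approx (hirr : Irrational α₀) (m : ℕ) (p' q' : ℤ) (hq'0 : 0 < q')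
    (hlt : q' < qSeq α₀ (m+1)) :
    1 / (2 * (qSeq α₀ (m+1) : ℝ)) ≤ |(q' : ℝ) * α₀ - (p' : ℝ)| := by
  refine le_trans (dSeq_lower hirr m) ?_
  set x : ℤ := (-1)^m * (p' * qSeq α₀ m - q' * pSeq α₀ m) with hxdef
  set y : ℤ := (-1)^m * (q' * pSeq α₀ (m+1) - p' * qSeq α₀ (m+1)) with hydef
  have hdet := det_eq hirr m
  have hsqZ : ((-1:ℤ)^m) * ((-1:ℤ)^m) = 1 := by
    rw [← pow_add]; exact Even.neg_one_pow ⟨m, rfl⟩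
  have hqd : x * qSeq α₀ (m+1) + y * qSeq α₀ m = q' := by
    rw [hxdef, hydef]
    linear_combination ((-1:ℤ)^m * q') * hdet + q' * hsqZ
  have hpd : x * pSeq α₀ (m+1) + y * pSeq α₀ m = p' := by
    rw [hxdef, hydef]
    linear_combination ((-1:ℤ)^m * p') * hdet + p' * hsqZ
  have hkey : (q':ℝ) * α₀ - (p':ℝ) = (x:ℝ) * dSeq α₀ (m+1) + (y:ℝ) * dSeq α₀ m := by
    have hq := congrArg (Int.cast : ℤ → ℝ) hqd
    have hp := congrArg (Int.cast : ℤ → ℝ) hpd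
    push_cast at hq hp
    unfold dSeq
    linear_combination hp - α₀ * hq
  have hQm : 1 ≤ qSeq α₀ m := qSeq_pos hirr m
  have hQm1 : 1 ≤ qSeq α₀ (m+1) := qSeq_pos hirr (m+1)
  have hmono : qSeq α₀ m ≤ qSeq α₀ (m+1) := qSeq_mono hirr m
  have hDm := dSeq_sign hirr m
  have hDm1 := dSeq_sign hirr (m+1)
  by_cases hy : y = 0
  · exfalso
    rw [hy] at hqd
    simp at hqd
    rcases le_or_gt x 0 with h | h
    · nlinarith
    · have : 1 ≤ x := h
      nlinarith
  · have hy1 : 1 ≤ |y| := Int.one_le_abs hy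
    have hy1R : 1 ≤ |(y:ℝ)| := by exact_mod_cast (by push_cast [← Int.cast_abs]; exact_mod_cast hy1 : (1:ℝ) ≤ (|y| : ℝ))
    have habs_m := dSeq_abs hirr m
    have hDmabs : (-1:ℝ)^m * dSeq α₀ m ≤ |(y:ℝ) * dSeq α₀ m| := by
      rw [abs_mul, ← habs_m]
      nlinarith [abs_nonneg (dSeq α₀ m)]
    by_cases hx : x = 0
    · rw [hkey, hx]
      push_cast
      rw [zero_mul, zero_add]
      exact hDmabs
    · -- x ≠ 0, y ≠ 0: opposite signs
      have hxy : x * y < 0 := by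
        rcases lt_trichotomy x 0 with hx1 | hx1 | hx1
        · rcases lt_trichotomy y 0 with hy1' | hy1' | hy1'
          · exfalso; nlinarith
          · exact absurd hy1' hy
          · exact mul_neg_of_neg_of_pos hx1 hy1'
        · exact absurd hx1 hx
        · rcases lt_trichotomy y 0 with hy1' | hy1' | hy1'
          · exact mul_neg_of_pos_of_neg hx1 hy1'
          · exact absurd hy1' hy
          · exfalso; nlinarith
      have hDprod : dSeq α₀ (m+1) * dSeq α₀ m < 0 := by
        have hsgn : ((-1:ℝ)^(m+1) * dSeq α₀ (m+1)) * ((-1:ℝ)^m * dSeq α₀ m)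
            = -(dSeq α₀ (m+1) * dSeq α₀ m) := by
          have hsqR : ((-1:ℝ)^m) * ((-1:ℝ)^m) = 1 := by
            rw [← pow_add]; exact Even.neg_one_pow ⟨m, rfl⟩
          rw [pow_succ]
          linear_combination (-(dSeq α₀ (m+1) * dSeq α₀ m)) * hsqR
        nlinarith
      have hxyR : ((x:ℝ)) * ((y:ℝ)) < 0 := by exact_mod_cast hxy
      have hprod : 0 < ((x:ℝ) * dSeq α₀ (m+1)) * ((y:ℝ) * dSeq α₀ m) := by
        nlinarith
      rw [hkey]
      set s := (x:ℝ) * dSeq α₀ (m+1) with hs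
      set t := (y:ℝ) * dSeq α₀ m with ht
      have habs_st : |t| ≤ |s + t| := by
        rcases le_or_gt s 0 with hs0 | hs0
        · have hsneg : s < 0 := lt_of_le_of_ne hs0 (by intro h; rw [h] at hprod; simp at hprod)
          have htneg : t < 0 := by nlinarith
          rw [abs_of_neg htneg, abs_of_neg (by linarith : s + t < 0)]
          linarith
        · have htpos : 0 < t := by nlinarith
          rw [abs_of_pos htpos, abs_of_pos (by linarith : 0 < s + t)]
          linarith
      exact le_trans hDmabs habs_st

lemma arith_core (q Q r c x : ℝ) (hq : 1 ≤ q) (hQ : 2 ≤ Q) (hqQ : q ≤ Q - 1)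
    (hr : 0 < r) (hrle : r ≤ 1/(8*q)) (hc : c = 1/(2*Q^3))
    (hx2 : 1/(4*q^2*Q^2) ≤ x^2) : 2*r*c + c^2 ≤ x^2 := by
  have hq0 : 0 < q := by linarith
  have hQ0 : 0 < Q := by linarith
  have hA : 1/(8*q*Q^3) ≤ 1/(8*q^2*Q^2) := by
    apply one_div_le_one_div_of_le (by positivity)
    nlinarith [mul_nonneg (mul_nonneg hq0.le (sq_nonneg Q)) (by linarith : (0:ℝ) ≤ Q - q)]
  have hB : 1/(4*Q^6) ≤ 1/(8*q^2*Q^2) := by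
    apply one_div_le_one_div_of_le (by positivity)
    have h1 : q^2 ≤ Q^2 := by nlinarith
    have h2 : (4:ℝ) ≤ Q^2 := by nlinarith
    have h3 : 8*q^2*Q^2 ≤ 8*Q^2*Q^2 := by nlinarith
    have h4 : Q^4*4 ≤ Q^4*Q^2 := by
      nlinarith [mul_le_mul_of_nonneg_left h2 (by positivity : (0:ℝ) ≤ Q^4)]
    nlinarith
  have hcpos : 0 < c := by rw [hc]; positivity
  have hrc : 2*r*c ≤ 1/(8*q*Q^3) := by
    have h1 : 2*r*c ≤ 2*(1/(8*q))*c := by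
      nlinarith [mul_le_mul_of_nonneg_right hrle (le_of_lt hcpos)]
    have h2 : 2*(1/(8*q))*c = 1/(8*q*Q^3) := by rw [hc]; field_simp
    linarith
  have hc2 : c^2 = 1/(4*Q^6) := by rw [hc]; field_simp; ring
  have hhalf : 1/(8*q^2*Q^2) + 1/(8*q^2*Q^2) = 1/(4*q^2*Q^2) := by ring
  linarith

open Complex

/-- Let `α₀` be irrational with convergent denominator `q_n ≥ 2`, and let `p'/q'` be a rational
in lowest terms with `0 < q' < q_n`. If a complex number `α` lies in the open disk of radius
`ρ = (log 2)/(2π q')` tangent to the real axis at `p'/q'` (from either side), then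
`|α − α₀| ≥ 1/(2 q_n³)`. -/
theorem yoccoz_disk_far_from_alpha (α₀ : ℝ) (hirr : Irrational α₀) (n : ℕ)
    (hqn : 2 ≤ qSeq α₀ n) (p' q' : ℤ) (hq' : 0 < q') (hcop : Int.gcd p' q' = 1)
    (hlt : q' < qSeq α₀ n) (α : ℂ)
    (hα : α ∈ Metric.ball (((p' : ℂ) / (q' : ℂ)) +
            (Real.log 2 / (2 * Real.pi * (q' : ℝ)) : ℝ) * Complex.I)
            (Real.log 2 / (2 * Real.pi * (q' : ℝ))) ∪
          Metric.ball (((p' : ℂ) / (q' : ℂ)) -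
            (Real.log 2 / (2 * Real.pi * (q' : ℝ)) : ℝ) * Complex.I)
            (Real.log 2 / (2 * Real.pi * (q' : ℝ)))) :
    1 / (2 * (qSeq α₀ n : ℝ) ^ 3) ≤ ‖α - (α₀ : ℂ)‖ := by
  obtain ⟨m, rfl⟩ : ∃ m, n = m + 1 := by
    cases n with
    | zero => exfalso; rw [show qSeq α₀ 0 = 1 from rfl] at hqn; omega
    | succ m => exact ⟨m, rfl⟩
  set Q : ℝ := (qSeq α₀ (m+1) : ℝ) with hQdef
  have hQ2 : (2:ℝ) ≤ Q := by rw [hQdef]; exact_mod_cast hqn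
  have hq'R : (1:ℝ) ≤ (q':ℝ) := by exact_mod_cast hq'
  have hq'pos : (0:ℝ) < (q':ℝ) := by linarith
  have hqltR : (q':ℝ) ≤ Q - 1 := by
    have h1 : q' + 1 ≤ qSeq α₀ (m+1) := hlt
    have h2 : ((q':ℝ)) + 1 ≤ Q := by
      rw [hQdef]; exact_mod_cast h1
    linarith
  -- best approximation gives lower bound on |x| where x = p'/q' - α₀
  have hba := best_approx hirr m p' q' hq' hlt
  set w : ℝ := (q':ℝ) * α₀ - (p':ℝ) with hwdef
  set x : ℝ := (p':ℝ)/(q':ℝ) - α₀ with hxdef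
  have hxw : x * (q':ℝ) = -w := by rw [hxdef, hwdef]; field_simp; ring
  have hw1 : 1 ≤ 2 * Q * |w| := by
    rw [div_le_iff₀ (by positivity)] at hba; linarith
  have hw2 : 1 ≤ 4 * Q^2 * w^2 := by nlinarith [_root_.sq_abs w, abs_nonneg w]
  have hx2 : 1 / (4 * (q':ℝ)^2 * Q^2) ≤ x^2 := by
    have hxw2 : x^2 * (q':ℝ)^2 = w^2 := by
      rw [← mul_pow, hxw]; ring
    have h4 : 4*Q^2*(x^2*(q':ℝ)^2) = 4*Q^2*w^2 := by rw [hxw2]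
    rw [div_le_iff₀ (by positivity)]
    nlinarith [hw2, h4]
  -- the radius
  set r : ℝ := Real.log 2 / (2 * Real.pi * (q':ℝ)) with hrdef
  have hlog2 : 0 < Real.log 2 := Real.log_pos (by norm_num)
  have hrpos : 0 < r := by
    rw [hrdef]; exact div_pos hlog2 (by positivity)
  have hrle : r ≤ 1 / (8 * (q':ℝ)) := by
    rw [hrdef, div_le_div_iff₀ (by positivity) (by positivity)]
    have hpi : 3.141592 < Real.pi := Real.pi_gt_d6
    have hl2 : Real.log 2 < 0.6931471808 := Real.log_two_lt_d9
    nlinarith [mul_pos hq'pos (by nlinarith : (0:ℝ) < 2*Real.pi - 8*Real.log 2)]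
  -- arithmetic core
  set c : ℝ := 1 / (2 * Q^3) with hcdef
  have hcpos : 0 < c := by positivity
  have hcore : 2*r*c + c^2 ≤ x^2 :=
    arith_core (q':ℝ) Q r c x hq'R hQ2 hqltR hrpos hrle hcdef hx2
  -- sqrt step
  have hsqrt : r + c ≤ Real.sqrt (x^2 + r^2) := by
    rw [Real.le_sqrt (by positivity) (by positivity)]
    nlinarith
  -- complex geometry
  have htri : ∀ cc : ℂ, ‖cc - (α₀:ℂ)‖ ≤ ‖cc - α‖ + ‖α - (α₀:ℂ)‖ :=
    fun cc => norm_sub_le_norm_sub_add_norm_sub cc α (α₀:ℂ)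
  have main : Real.sqrt (x^2 + r^2) < r + ‖α - (α₀:ℂ)‖ := by
    rcases hα with h | h
    · set cc : ℂ := ((p' : ℂ) / (q' : ℂ)) + (r:ℝ) * Complex.I with hcc
      have hd : ‖cc - α‖ < r := by
        rw [Metric.mem_ball, Complex.dist_eq] at h
        rw [norm_sub_rev] at h
        exact h
      have habscc : ‖cc - (α₀:ℂ)‖ = Real.sqrt (x^2 + r^2) := by
        have he : cc - (α₀:ℂ) = ((x : ℝ) : ℂ) + ((r:ℝ)) * Complex.I := by
          rw [hcc, hxdef]; push_cast; ring
        rw [he, Complex.norm_add_mul_I]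
      have := htri cc
      rw [habscc] at this
      linarith
    · set cc : ℂ := ((p' : ℂ) / (q' : ℂ)) - (r:ℝ) * Complex.I with hcc
      have hd : ‖cc - α‖ < r := by
        rw [Metric.mem_ball, Complex.dist_eq] at h
        rw [norm_sub_rev] at h
        exact h
      have habscc : ‖cc - (α₀:ℂ)‖ = Real.sqrt (x^2 + r^2) := by
        have he : cc - (α₀:ℂ) = ((x : ℝ) : ℂ) + ((-r:ℝ)) * Complex.I := by
          rw [hcc, hxdef]; push_cast; ring
        rw [he, Complex.norm_add_mul_I, neg_pow]
        norm_num
      have := htri cc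
      rw [habscc] at this
      linarith
  have : c < ‖α - (α₀:ℂ)‖ := by linarith
  have hgoal : 1 / (2 * Q ^ 3) = c := hcdef.symm
  rw [hQdef] at hgoal
  linarith [hgoal ▸ this]
end

section
/- Let δ ∈ (0, 1/10) and α ∈ (0,1). Then for all r ∈ (0,1): the hyperbolic distance in the punctured disk B(0,e)∖{0} between α and any point z with |z − α| > δα is at least δ/(2 log(e/α)). Equivalently: if the hyperbolic distance d_{B(0,e)∖{0}}(α, z) ≤ δ/(2 log(e/α)), then |z − α| ≤ δα. -/
open Set

/-- The punctured disk `B(0,e) ∖ {0}` in `ℂ`. -/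
def punctDisk : Set ℂ := {z : ℂ | z ≠ 0 ∧ ‖z‖ < Real.exp 1}

/-- The density of the hyperbolic metric of the punctured disk `B(0,e) ∖ {0}`:
`ρ(z) = 1/(|z| log(e/|z|))`. -/
noncomputable def punctDensity (z : ℂ) : ℝ :=
  1 / (‖z‖ * Real.log (Real.exp 1 / ‖z‖))

/-- The hyperbolic distance in `B(0,e) ∖ {0}`: the infimum of hyperbolic lengths of `C¹`
paths joining the two points inside the punctured disk. -/
noncomputable def punctHypDist (a b : ℂ) : ℝ :=
  sInf {L : ℝ | ∃ γ : ℝ → ℂ, γ 0 = a ∧ γ 1 = b ∧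
    (∀ t ∈ Icc (0 : ℝ) 1, γ t ∈ punctDisk) ∧ ContDiffOn ℝ 1 γ (Icc (0 : ℝ) 1) ∧
    L = ∫ t in (0 : ℝ)..1, punctDensity (γ t) * ‖deriv γ t‖}

private lemma lemA (t : ℝ) (ht : 0 < t) : t - t * Real.log t ≤ 1 := by
  have h1 : Real.log t⁻¹ ≤ t⁻¹ - 1 := Real.log_le_sub_one_of_pos (inv_pos.mpr ht)
  rw [Real.log_inv] at h1
  have h2 : t * (-Real.log t) ≤ t * (t⁻¹ - 1) := mul_le_mul_of_nonneg_left h1 ht.le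
  have h3 : t * t⁻¹ = 1 := mul_inv_cancel₀ ht.ne'
  nlinarith

private lemma lemB (x y : ℝ) (hx : 0 < x) (hxy : x ≤ y) (hy1 : y ≤ 1) :
    x * (1 - Real.log x) ≤ y * (1 - Real.log y) := by
  have hy0 : 0 < y := lt_of_lt_of_le hx hxy
  set t := x / y with htdef
  have ht : 0 < t := div_pos hx hy0
  have ht1 : t ≤ 1 := (div_le_one hy0).mpr hxy
  have hxty : x = t * y := by rw [htdef, div_mul_cancel₀ x hy0.ne']
  have hlog : Real.log x = Real.log t + Real.log y := by
    rw [hxty, Real.log_mul ht.ne' hy0.ne']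
  have hA : t - t * Real.log t ≤ 1 := lemA t ht
  have hlogy : Real.log y ≤ 0 := Real.log_nonpos hy0.le hy1
  rw [hlog, hxty]
  have key1 : 0 ≤ y * (1 - (t - t * Real.log t)) :=
    mul_nonneg hy0.le (by linarith)
  have key2 : 0 ≤ y * ((1 - t) * (-Real.log y)) :=
    mul_nonneg hy0.le (mul_nonneg (by linarith) (by linarith))
  nlinarith

private lemma glemma (α x : ℝ) (hα0 : 0 < α) (hα1 : α < 1) (hx0 : 0 < x)
    (hx : x ≤ 1.1 * α) : x * (1 - Real.log x) ≤ 2 * α * (1 - Real.log α) := by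
  have hlogα : Real.log α < 0 := Real.log_neg hα0 hα1
  by_cases hx1 : x ≤ 1
  · by_cases h11 : 1.1 * α ≤ 1
    · have hB := lemB x (1.1 * α) hx0 hx h11
      have hlogmono : Real.log α ≤ Real.log (1.1 * α) :=
        Real.log_le_log hα0 (by nlinarith)
      have hpos : 0 < 1 - Real.log (1.1 * α) := by
        have := Real.log_nonpos (by positivity) h11
        linarith
      nlinarith
    · have hB := lemB x 1 hx0 hx1 le_rfl
      simp [Real.log_one] at hB
      -- 2α(1 - log α) ≥ 1 since 1 < 1.1 α
      nlinarith
  · push_neg at hx1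
    have hA : x - x * Real.log x ≤ 1 := lemA x hx0
    have h1 : (1:ℝ) < 1.1 * α := lt_of_lt_of_le hx1 hx
    nlinarith

private lemma log_exp_one_div (x : ℝ) (hx : 0 < x) :
    Real.log (Real.exp 1 / x) = 1 - Real.log x := by
  rw [Real.log_div (Real.exp_ne_zero 1) hx.ne', Real.log_exp]

private lemma density_lb (α : ℝ) (hα0 : 0 < α) (hα1 : α < 1) (w : ℂ)
    (hw : w ∈ punctDisk) (hwle : ‖w‖ ≤ 1.1 * α) :
    1 / (2 * α * Real.log (Real.exp 1 / α)) ≤ punctDensity w := by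
  have hx0 : 0 < ‖w‖ := norm_pos_iff.mpr hw.1
  rw [punctDensity, log_exp_one_div _ hx0, log_exp_one_div _ hα0]
  have hkey := glemma α (‖w‖) hα0 hα1 hx0 hwle
  have hlogα : Real.log α < 0 := Real.log_neg hα0 hα1
  have hden2 : 0 < 2 * α * (1 - Real.log α) := by nlinarith
  have hxe : ‖w‖ < Real.exp 1 := hw.2
  have hlogx : Real.log (‖w‖) < 1 := by
    rw [← Real.log_exp 1]
    exact Real.log_lt_log hx0 hxe
  have hden1 : 0 < ‖w‖ * (1 - Real.log (‖w‖)) := by nlinarith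
  exact one_div_le_one_div_of_le hden1 hkey

private lemma punctDensity_nonneg (w : ℂ) (hw : w ∈ punctDisk) : 0 ≤ punctDensity w := by
  have hx0 : 0 < ‖w‖ := norm_pos_iff.mpr hw.1
  rw [punctDensity]
  apply one_div_nonneg.mpr
  apply mul_nonneg hx0.le
  apply Real.log_nonneg
  rw [le_div_iff₀ hx0]
  simpa using hw.2.le

private lemma integrable_helper {E : Type*} [NormedAddCommGroup E] (f G : ℝ → E)
    (a b : ℝ) (h0 : 0 ≤ a) (hab : a ≤ b) (hb : b ≤ 1)
    (hG : ContinuousOn G (Icc 0 1)) (hfg : ∀ t ∈ Ioo (0:ℝ) 1, f t = G t) :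
    IntervalIntegrable f MeasureTheory.volume a b := by
  have hGi : MeasureTheory.IntegrableOn G (Icc a b) :=
    (hG.mono (Icc_subset_Icc h0 hb)).integrableOn_Icc
  have hGi' : MeasureTheory.IntegrableOn G (Ioc a b) := hGi.mono_set Ioc_subset_Icc_self
  rw [intervalIntegrable_iff_integrableOn_Ioc_of_le hab]
  apply hGi'.congr_fun_ae
  have h1 : ∀ᵐ t ∂(MeasureTheory.volume.restrict (Ioc a b)), t ∈ Ioc a b :=
    MeasureTheory.ae_restrict_mem measurableSet_Ioc
  have h2 : ∀ᵐ t ∂(MeasureTheory.volume.restrict (Ioc a b)), t ≠ 1 := by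
    apply MeasureTheory.ae_restrict_of_ae
    rw [MeasureTheory.ae_iff]
    simpa using Real.volume_singleton
  filter_upwards [h1, h2] with t ht hne
  exact (hfg t ⟨lt_of_le_of_lt h0 ht.1, lt_of_le_of_ne (le_trans ht.2 hb) hne⟩).symm

set_option maxHeartbeats 1000000 in
/-- For `δ ∈ (0,1/10)` and `α ∈ (0,1)`: any point `z` of the punctured disk `B(0,e) ∖ {0}`
at hyperbolic distance at most `δ/(2 log(e/α))` from `α` satisfies `|z − α| ≤ δα`. -/
theorem hyp_dist_close_implies_euclid_close (δ α : ℝ) (hδ : δ ∈ Ioo (0 : ℝ) (1 / 10))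
    (hα : α ∈ Ioo (0 : ℝ) 1) (z : ℂ) (hz : z ∈ punctDisk)
    (h : punctHypDist (α : ℂ) z ≤ δ / (2 * Real.log (Real.exp 1 / α))) :
    ‖z - (α : ℂ)‖ ≤ δ * α := by
  obtain ⟨hδ0, hδ1⟩ := hδ
  obtain ⟨hα0, hα1⟩ := hα
  have hLα : Real.log (Real.exp 1 / α) = 1 - Real.log α := log_exp_one_div α hα0
  have hlogα : Real.log α < 0 := Real.log_neg hα0 hα1
  have hLαpos : 0 < Real.log (Real.exp 1 / α) := by rw [hLα]; linarith
  by_contra hcon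
  push_neg at hcon
  set d0 := ‖z - (α : ℂ)‖ with hd0
  set r0 := min (α / 10) ((δ * α + d0) / 2) with hr0def
  have hδα : δ * α < α / 10 := by nlinarith
  have hδαd0 : δ * α < d0 := hcon
  have hr0gt : δ * α < r0 := lt_min hδα (by linarith)
  have hr0pos : 0 < r0 := lt_trans (by positivity) hr0gt
  have hr0d0 : r0 < d0 := lt_of_le_of_lt (min_le_right _ _) (by linarith)
  have hr0le : r0 ≤ α / 10 := min_le_left _ _
  set m := 1 / (2 * α * Real.log (Real.exp 1 / α)) with hmdef
  have hmpos : 0 < m := by rw [hmdef]; positivity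
  -- every admissible path has length at least r0 * m
  have key : ∀ L ∈ {L : ℝ | ∃ γ : ℝ → ℂ, γ 0 = (α:ℂ) ∧ γ 1 = z ∧
      (∀ t ∈ Icc (0 : ℝ) 1, γ t ∈ punctDisk) ∧ ContDiffOn ℝ 1 γ (Icc (0 : ℝ) 1) ∧
      L = ∫ t in (0 : ℝ)..1, punctDensity (γ t) * ‖deriv γ t‖}, r0 * m ≤ L := by
    intro L hL
    obtain ⟨γ, hγ0, hγ1, hmem, hC1, hLdef⟩ := hL
    set g := derivWithin γ (Icc (0:ℝ) 1) with hgdef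
    have hgc : ContinuousOn g (Icc 0 1) :=
      hC1.continuousOn_derivWithin (uniqueDiffOn_Icc one_pos) le_rfl
    have hγc : ContinuousOn γ (Icc 0 1) := hC1.continuousOn
    have hderiv : ∀ t ∈ Ioo (0:ℝ) 1, HasDerivAt γ (deriv γ t) t := by
      intro t ht
      have hnh : Icc (0:ℝ) 1 ∈ nhds t := Icc_mem_nhds ht.1 ht.2
      exact (((hC1.differentiableOn one_ne_zero) t (Ioo_subset_Icc_self ht)).differentiableAt
        hnh).hasDerivAt
    have hderiv_eq : ∀ t ∈ Ioo (0:ℝ) 1, deriv γ t = g t := by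
      intro t ht
      exact (derivWithin_of_mem_nhds (Icc_mem_nhds ht.1 ht.2)).symm
    -- continuity of density along the path
    have habs : ContinuousOn (fun t => ‖γ t‖) (Icc (0:ℝ) 1) :=
      continuous_norm.comp_continuousOn hγc
    have habsne : ∀ t ∈ Icc (0:ℝ) 1, ‖γ t‖ ≠ 0 :=
      fun t ht => (norm_pos_iff.mpr (hmem t ht).1).ne'
    have hρc : ContinuousOn (fun t => punctDensity (γ t)) (Icc (0:ℝ) 1) := by
      simp only [punctDensity]
      apply ContinuousOn.div continuousOn_const
      · exact habs.mul ((continuousOn_const.div habs habsne).log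
          (fun t ht => (div_ne_zero (Real.exp_ne_zero 1) (habsne t ht))))
      · intro t ht
        apply mul_ne_zero (habsne t ht)
        have := (hmem t ht)
        have habspos : 0 < ‖γ t‖ := norm_pos_iff.mpr this.1
        exact (Real.log_pos ((one_lt_div habspos).mpr this.2)).ne'
    -- first exit time from the ball of radius r0 around α
    set K := {t : ℝ | t ∈ Icc (0:ℝ) 1 ∧ r0 ≤ dist (γ t) ((α:ℝ):ℂ)} with hKdef
    have hdistz : dist z ((α:ℝ):ℂ) = d0 := by rw [Complex.dist_eq, hd0]
    have hK1 : (1:ℝ) ∈ K := by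
      refine ⟨right_mem_Icc.mpr zero_le_one, ?_⟩
      rw [hγ1, hdistz]; exact hr0d0.le
    have hKbdd : BddBelow K := ⟨0, fun t ht => ht.1.1⟩
    have hdistc : ContinuousOn (fun t => dist (γ t) ((α:ℝ):ℂ)) (Icc (0:ℝ) 1) :=
      (continuous_id.dist continuous_const).comp_continuousOn hγc
    have hKclosed : IsClosed K := by
      have : K = Icc (0:ℝ) 1 ∩ (fun t => dist (γ t) ((α:ℝ):ℂ)) ⁻¹' (Ici r0) := by
        ext t; simp [hKdef, and_comm]
      rw [this]
      exact hdistc.preimage_isClosed_of_isClosed isClosed_Icc isClosed_Ici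
    set T := sInf K with hTdef
    have hTK : T ∈ K := hKclosed.csInf_mem ⟨1, hK1⟩ hKbdd
    have hT0 : 0 ≤ T := hTK.1.1
    have hT1 : T ≤ 1 := hTK.1.2
    have hTpos : 0 < T := by
      rcases eq_or_lt_of_le hT0 with heq | hlt
      · exfalso
        have := hTK.2
        rw [← heq, hγ0] at this
        simp at this
        linarith
      · exact hlt
    have hlt : ∀ t, 0 ≤ t → t < T → dist (γ t) ((α:ℝ):ℂ) < r0 := by
      intro t h1 h2
      by_contra hge
      push_neg at hge
      have htK : t ∈ K := ⟨⟨h1, le_trans h2.le hT1⟩, hge⟩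
      exact absurd (csInf_le hKbdd htK) (not_le.mpr h2)
    have hTle : dist (γ T) ((α:ℝ):ℂ) ≤ r0 := by
      have hcw : ContinuousWithinAt (fun t => dist (γ t) ((α:ℝ):ℂ)) (Ico 0 T) T := by
        apply (hdistc T hTK.1).mono
        exact fun t ht => ⟨ht.1, le_trans ht.2.le hT1⟩
      haveI hne' : (nhdsWithin T (Ico (0:ℝ) T)).NeBot := by
        apply mem_closure_iff_nhdsWithin_neBot.mp
        rw [closure_Ico hTpos.ne]
        exact right_mem_Icc.mpr hT0
      refine le_of_tendsto hcw ?_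
      filter_upwards [self_mem_nhdsWithin] with t ht
      exact (hlt t ht.1 ht.2).le
    have hIcc_le : ∀ t ∈ Icc (0:ℝ) T, dist (γ t) ((α:ℝ):ℂ) ≤ r0 := by
      intro t ht
      rcases eq_or_lt_of_le ht.2 with heq | hlt'
      · rw [heq]; exact hTle
      · exact (hlt t ht.1 hlt').le
    have hIccT_sub : Icc (0:ℝ) T ⊆ Icc (0:ℝ) 1 := Icc_subset_Icc le_rfl hT1
    -- density lower bound on [0, T]
    have hρ_lb : ∀ t ∈ Icc (0:ℝ) T, m ≤ punctDensity (γ t) := by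
      intro t ht
      have ht1 : t ∈ Icc (0:ℝ) 1 := hIccT_sub ht
      have hw : γ t ∈ punctDisk := hmem t ht1
      have hwle : ‖γ t‖ ≤ 1.1 * α := by
        have h2 : ‖γ t - ((α:ℝ):ℂ)‖ ≤ r0 := by
          rw [← Complex.dist_eq]; exact hIcc_le t ht
        have heq' : γ t - ((α:ℝ):ℂ) + ((α:ℝ):ℂ) = γ t := sub_add_cancel _ _
        have h1 : ‖γ t‖ ≤ r0 + α := by
          calc ‖γ t‖ = ‖γ t - ((α:ℝ):ℂ) + ((α:ℝ):ℂ)‖ := by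
                rw [heq']
            _ ≤ ‖γ t - ((α:ℝ):ℂ)‖ + ‖((α:ℝ):ℂ)‖ :=
                norm_add_le _ _
            _ ≤ r0 + α := by rw [Complex.norm_real, Real.norm_eq_abs, abs_of_pos hα0]; linarith
        linarith [hr0le]
      exact density_lb α hα0 hα1 (γ t) hw hwle
    -- integrabilities
    have hGfullc : ContinuousOn (fun t => punctDensity (γ t) * ‖g t‖) (Icc (0:ℝ) 1) :=
      hρc.mul hgc.norm
    have hF01 : IntervalIntegrable (fun t => punctDensity (γ t) * ‖deriv γ t‖)
        MeasureTheory.volume 0 1 :=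
      integrable_helper _ _ 0 1 le_rfl zero_le_one le_rfl hGfullc
        (fun t ht => by rw [hderiv_eq t ht])
    have hF0T : IntervalIntegrable (fun t => punctDensity (γ t) * ‖deriv γ t‖)
        MeasureTheory.volume 0 T :=
      integrable_helper _ _ 0 T le_rfl hT0 hT1 hGfullc
        (fun t ht => by rw [hderiv_eq t ht])
    have hFT1 : IntervalIntegrable (fun t => punctDensity (γ t) * ‖deriv γ t‖)
        MeasureTheory.volume T 1 :=
      integrable_helper _ _ T 1 hT0 hT1 le_rfl hGfullc
        (fun t ht => by rw [hderiv_eq t ht])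
    have hnormint : IntervalIntegrable (fun t => ‖deriv γ t‖) MeasureTheory.volume 0 T :=
      integrable_helper _ (fun t => ‖g t‖) 0 T le_rfl hT0 hT1 hgc.norm
        (fun t ht => by rw [hderiv_eq t ht])
    have hderint : IntervalIntegrable (deriv γ) MeasureTheory.volume 0 T :=
      integrable_helper _ g 0 T le_rfl hT0 hT1 hgc (fun t ht => hderiv_eq t ht)
    -- FTC on [0, T]
    have hFTC : ∫ t in (0:ℝ)..T, deriv γ t = γ T - γ 0 := by
      apply intervalIntegral.integral_eq_sub_of_hasDeriv_right_of_le hT0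
        (hγc.mono hIccT_sub) ?_ hderint
      intro t ht
      have ht' : t ∈ Ioo (0:ℝ) 1 := ⟨ht.1, lt_of_lt_of_le ht.2 hT1⟩
      exact (hderiv t ht').hasDerivWithinAt
    have hstep : r0 ≤ ‖γ T - γ 0‖ := by
      rw [hγ0, ← dist_eq_norm]
      exact hTK.2
    have hnorm_le : ‖γ T - γ 0‖ ≤ ∫ t in (0:ℝ)..T, ‖deriv γ t‖ := by
      rw [← hFTC]
      exact intervalIntegral.norm_integral_le_integral_norm hT0
    -- chain of inequalities
    have hstep1 : ∫ t in (0:ℝ)..T, m * ‖deriv γ t‖ ≤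
        ∫ t in (0:ℝ)..T, punctDensity (γ t) * ‖deriv γ t‖ := by
      apply intervalIntegral.integral_mono_on hT0 (hnormint.const_mul m) hF0T
      intro t ht
      exact mul_le_mul_of_nonneg_right (hρ_lb t ht) (norm_nonneg _)
    have hstep2 : (∫ t in (0:ℝ)..T, m * ‖deriv γ t‖) = m * ∫ t in (0:ℝ)..T, ‖deriv γ t‖ :=
      intervalIntegral.integral_const_mul m _
    have hstep3 : (0:ℝ) ≤ ∫ t in T..(1:ℝ), punctDensity (γ t) * ‖deriv γ t‖ := by
      apply intervalIntegral.integral_nonneg hT1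
      intro u hu
      have hu1 : u ∈ Icc (0:ℝ) 1 := ⟨le_trans hT0 hu.1, hu.2⟩
      exact mul_nonneg (punctDensity_nonneg _ (hmem u hu1)) (norm_nonneg _)
    have hsplit : (∫ t in (0:ℝ)..T, punctDensity (γ t) * ‖deriv γ t‖) +
        (∫ t in T..(1:ℝ), punctDensity (γ t) * ‖deriv γ t‖) =
        ∫ t in (0:ℝ)..1, punctDensity (γ t) * ‖deriv γ t‖ :=
      intervalIntegral.integral_add_adjacent_intervals hF0T hFT1
    calc r0 * m = m * r0 := mul_comm _ _
      _ ≤ m * ‖γ T - γ 0‖ := mul_le_mul_of_nonneg_left hstep hmpos.le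
      _ ≤ m * ∫ t in (0:ℝ)..T, ‖deriv γ t‖ := mul_le_mul_of_nonneg_left hnorm_le hmpos.le
      _ = ∫ t in (0:ℝ)..T, m * ‖deriv γ t‖ := hstep2.symm
      _ ≤ ∫ t in (0:ℝ)..T, punctDensity (γ t) * ‖deriv γ t‖ := hstep1
      _ ≤ ∫ t in (0:ℝ)..1, punctDensity (γ t) * ‖deriv γ t‖ := by linarith
      _ = L := hLdef.symm
  -- nonemptiness: explicit path from α to z
  have hne : Set.Nonempty {L : ℝ | ∃ γ : ℝ → ℂ, γ 0 = (α:ℂ) ∧ γ 1 = z ∧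
      (∀ t ∈ Icc (0 : ℝ) 1, γ t ∈ punctDisk) ∧ ContDiffOn ℝ 1 γ (Icc (0 : ℝ) 1) ∧
      L = ∫ t in (0 : ℝ)..1, punctDensity (γ t) * ‖deriv γ t‖} := by
    set R := ‖z‖ with hRdef
    set θ := Complex.arg z with hθdef
    have hR0 : 0 < R := norm_pos_iff.mpr hz.1
    have hRe : R < Real.exp 1 := hz.2
    have he1 : (1:ℝ) < Real.exp 1 := by have := Real.exp_one_gt_d9; linarith
    set γ₀ : ℝ → ℂ := fun t => (((1-t)*α + t*R : ℝ) : ℂ) *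
      Complex.exp ((((t*θ : ℝ)) : ℂ) * Complex.I) with hγ₀def
    have habs₀ : ∀ t : ℝ, ‖γ₀ t‖ = |(1-t)*α + t*R| := by
      intro t
      have hre : ((((t*θ : ℝ)) : ℂ) * Complex.I).re = 0 := by simp
      simp only [hγ₀def]
      rw [norm_mul, Complex.norm_exp, hre, Real.exp_zero, mul_one, Complex.norm_real, Real.norm_eq_abs]
    have hc1 : ContDiff ℝ 1 (fun t : ℝ => ((1-t)*α + t*R : ℝ)) := by fun_prop
    have hc2 : ContDiff ℝ 1 (fun t : ℝ => (t*θ : ℝ)) := by fun_prop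
    have hcd : ContDiff ℝ 1 γ₀ := by
      apply ContDiff.mul
      · exact Complex.ofRealCLM.contDiff.comp hc1
      · exact Complex.contDiff_exp.comp
          ((Complex.ofRealCLM.contDiff.comp hc2).mul contDiff_const)
    refine ⟨_, γ₀, ?_, ?_, ?_, hcd.contDiffOn, rfl⟩
    · simp [hγ₀def]
    · have : γ₀ 1 = ((R : ℝ) : ℂ) * Complex.exp (((θ : ℝ) : ℂ) * Complex.I) := by
        simp [hγ₀def]
      rw [this, hRdef, hθdef]
      exact Complex.norm_mul_exp_arg_mul_I z
    · intro t ht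
      have hpos : 0 < (1-t)*α + t*R := by
        rcases le_total t (1/2) with h' | h'
        · nlinarith [mul_pos (by linarith : (0:ℝ) < 1 - t) hα0,
            mul_nonneg ht.1 hR0.le]
        · nlinarith [mul_pos (by linarith : (0:ℝ) < t) hR0,
            mul_nonneg (by linarith [ht.2] : (0:ℝ) ≤ 1 - t) hα0.le]
      have hltE : (1-t)*α + t*R < Real.exp 1 := by
        rcases le_total t (1/2) with h' | h'
        · nlinarith [mul_pos (by linarith : (0:ℝ) < 1 - t)
            (by linarith : (0:ℝ) < Real.exp 1 - α),
            mul_nonneg ht.1 (by linarith : (0:ℝ) ≤ Real.exp 1 - R)]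
        · nlinarith [mul_pos (by linarith : (0:ℝ) < t)
            (by linarith : (0:ℝ) < Real.exp 1 - R),
            mul_nonneg (by linarith [ht.2] : (0:ℝ) ≤ 1 - t)
            (by linarith : (0:ℝ) ≤ Real.exp 1 - α)]
      constructor
      · intro hzero
        have h' := habs₀ t
        rw [hzero, norm_zero, abs_of_pos hpos] at h'
        linarith
      · rw [habs₀ t, abs_of_pos hpos]; exact hltE
  have hlow : r0 * m ≤ punctHypDist (α:ℂ) z := by
    rw [punctHypDist]
    exact le_csInf hne key
  have heq : δ / (2 * Real.log (Real.exp 1 / α)) = (δ * α) * m := by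
    rw [hmdef]
    field_simp
  have : r0 * m ≤ (δ * α) * m := by
    calc r0 * m ≤ punctHypDist (α:ℂ) z := hlow
      _ ≤ δ / (2 * Real.log (Real.exp 1 / α)) := h
      _ = (δ * α) * m := heq
  nlinarith [mul_pos (sub_pos.mpr hr0gt) hmpos]
end

section
/- For 0 < r < 1/2, the density ρ of the hyperbolic metric on 𝔻∖{r} at a point z with |z| ≤ r/10 satisfies ρ(z) ≤ 12/(r·log(e/r)). -/
/-- For `0 < r < 1/2`, the density of the hyperbolic metric on `𝔻 ∖ {r}`,
`ρ(z) = (1 − r²)/(|1 − rz|·|z − r|·log(|1 − rz|/|z − r|))`, satisfies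
`ρ(z) ≤ 12/(r log(e/r))` at every point `z` with `|z| ≤ r/10`. -/
theorem punctured_disk_density_bound (r : ℝ) (hr0 : 0 < r) (hr : r < 1 / 2) (z : ℂ)
    (hz : ‖z‖ ≤ r / 10) :
    (1 - r ^ 2) /
        (‖1 - (r : ℂ) * z‖ * ‖z - (r : ℂ)‖ *
          Real.log (‖1 - (r : ℂ) * z‖ / ‖z - (r : ℂ)‖)) ≤
      12 / (r * Real.log (Real.exp 1 / r)) := by
  set A := ‖1 - (r : ℂ) * z‖ with hA
  set B := ‖z - (r : ℂ)‖ with hB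
  set x := ‖z‖ with hxdef
  have hx0 : 0 ≤ x := norm_nonneg z
  have hrz : ‖(r : ℂ) * z‖ = r * x := by
    rw [norm_mul, Complex.norm_of_nonneg hr0.le]
  have hrabs : ‖(r : ℂ)‖ = r := by
    rw [Complex.norm_of_nonneg hr0.le]
  -- lower bound on A
  have hA_lb : (39 : ℝ)/40 ≤ A := by
    have h1 : ‖(1:ℂ)‖ - ‖(r:ℂ)*z‖ ≤ A :=
      norm_sub_norm_le 1 ((r:ℂ)*z)
    rw [norm_one, hrz] at h1
    nlinarith
  -- bounds on B
  have hB_lb : 9*r/10 ≤ B := by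
    have h1 : ‖(r:ℂ)‖ - ‖z‖ ≤ ‖(r:ℂ) - z‖ :=
      norm_sub_norm_le _ _
    rw [hrabs] at h1
    have h2 : ‖(r:ℂ) - z‖ = B := by rw [hB, norm_sub_rev]
    rw [h2] at h1
    linarith
  have hB_ub : B ≤ 11*r/10 := by
    have h1 : B ≤ ‖z‖ + ‖(r:ℂ)‖ := by
      calc B = ‖z + (-(r:ℂ))‖ := by rw [hB]; ring_nf
        _ ≤ ‖z‖ + ‖-(r:ℂ)‖ := norm_add_le _ _
        _ = ‖z‖ + ‖(r:ℂ)‖ := by rw [norm_neg]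
    rw [hrabs] at h1
    linarith
  have hApos : 0 < A := by linarith
  have hBpos : 0 < B := by linarith
  -- lower bound on A/B
  have hAB : 39/(44*r) ≤ A/B := by
    rw [div_le_div_iff₀ (by positivity) hBpos]
    nlinarith
  have hlog2 : (0.6931471803 : ℝ) < Real.log 2 := Real.log_two_gt_d9
  have hlogr : Real.log r ≤ -Real.log 2 := by
    have : Real.log r ≤ Real.log (1/2) := Real.log_le_log hr0 (le_of_lt hr)
    rwa [show (1:ℝ)/2 = 2⁻¹ by norm_num, Real.log_inv] at this
  have hlog3944 : -((5:ℝ)/39) ≤ Real.log (39/44) := by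
    rw [show (39:ℝ)/44 = (44/39)⁻¹ by norm_num, Real.log_inv]
    have := Real.log_le_sub_one_of_pos (show (0:ℝ) < 44/39 by norm_num)
    linarith
  have hLsplit : Real.log (39/(44*r)) = Real.log (39/44) - Real.log r := by
    rw [show (39:ℝ)/(44*r) = (39/44)/r by rw [div_div],
      Real.log_div (by norm_num) hr0.ne']
  set L := Real.log (A / B) with hLdef
  have hL_lb : Real.log (39/44) - Real.log r ≤ L := by
    rw [← hLsplit]
    exact Real.log_le_log (by positivity) hAB
  have hL_lb' : (0:ℝ) < Real.log (39/44) - Real.log r := by linarith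
  have hLpos : 0 < L := lt_of_lt_of_le hL_lb' hL_lb
  have hE : Real.log (Real.exp 1 / r) = 1 - Real.log r := by
    rw [Real.log_div (Real.exp_ne_zero 1) hr0.ne', Real.log_exp]
  rw [hE]
  have h1mlr : (0:ℝ) < 1 - Real.log r := by linarith
  rw [div_le_div_iff₀ (by positivity) (by positivity)]
  have key : (39/40) * (9*r/10) * (Real.log (39/44) - Real.log r) ≤ A * B * L := by
    apply mul_le_mul _ hL_lb (le_of_lt hL_lb') (by positivity)
    apply mul_le_mul hA_lb hB_lb (by linarith) (by linarith)
  nlinarith [mul_pos hr0 h1mlr, sq_nonneg r, mul_pos (mul_pos hr0 hr0) h1mlr,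
    mul_le_mul_of_nonneg_left hlogr (le_of_lt hr0),
    mul_le_mul_of_nonneg_left hlog3944 (le_of_lt hr0)]
end

section
/- Let p/q ∈ ℚ (in lowest terms) and suppose the q-th iterate of the quadratic polynomial P_{p/q}(z) = e^{2πi p/q} z + z² has expansion P_{p/q}^{∘q}(z) = z + A z^{q+1} + O(z^{q+2}) with A ≠ 0. For real ε near 0, let z_ε be any point of the exploding q-cycle of P_{p/q+ε} (so z_ε → 0 and P_{p/q+ε}^{∘q}(z_ε) = z_ε). Then z_ε^q = (1 − e^{2πi q ε})/A · (1 + O(z_ε)), hence z_ε = O(ε^{1/q}) and log|z_ε| = (1/q)·log|2π q ε / A| + O(ε^{1/q}). -/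
open Filter Complex

/-- The quadratic polynomial `P_α(z) = e^{2πiα} z + z²`. -/
noncomputable def Pquad (α : ℝ) (z : ℂ) : ℂ :=
  Complex.exp (2 * (Real.pi : ℂ) * Complex.I * (α : ℂ)) * z + z ^ 2

lemma sin_bounds {y : ℝ} (h0 : 0 ≤ y) (h1 : y ≤ 1) :
    y - y ^ 3 / 4 ≤ Real.sin y ∧ Real.sin y ≤ y := by
  rcases eq_or_lt_of_le h0 with h | h
  · simp [← h]
  · exact ⟨by have := Real.sin_gt_sub_cube h; nlinarith [pow_pos h 3], (Real.sin_lt h).le⟩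

lemma abs_sin_eq (x : ℝ) (h : |x| ≤ 1) : |Real.sin x| = Real.sin |x| := by
  have hpi := Real.pi_gt_three
  rcases le_or_gt 0 x with hx | hx
  · rw [_root_.abs_of_nonneg hx,
      _root_.abs_of_nonneg (Real.sin_nonneg_of_nonneg_of_le_pi hx (by rw [_root_.abs_of_nonneg hx] at h; linarith))]
  · have h1 : 0 ≤ Real.sin (-x) :=
      Real.sin_nonneg_of_nonneg_of_le_pi (by linarith) (by rw [abs_of_neg hx] at h; linarith)
    calc |Real.sin x| = |Real.sin (-x)| := by rw [Real.sin_neg, abs_neg]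
      _ = Real.sin (-x) := _root_.abs_of_nonneg h1
      _ = Real.sin |x| := by rw [abs_of_neg hx]

lemma abs_log_le {u : ℝ} (h : 1 / 2 ≤ u) : |Real.log u| ≤ 2 * |u - 1| := by
  have hu : (0 : ℝ) < u := by linarith
  rw [abs_le]
  constructor
  · have h2 : Real.log u⁻¹ ≤ u⁻¹ - 1 := Real.log_le_sub_one_of_pos (by positivity)
    rw [Real.log_inv] at h2
    have h3 : u⁻¹ - 1 ≤ 2 * |u - 1| := by
      have h4 : 1 - u ≤ |u - 1| := by rw [abs_sub_comm]; exact le_abs_self _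
      have h5 : u⁻¹ - 1 = (1 - u) / u := by field_simp
      rw [h5, div_le_iff₀ hu]
      nlinarith [abs_nonneg (u - 1)]
    linarith
  · have := Real.log_le_sub_one_of_pos hu
    have := le_abs_self (u - 1)
    have := abs_nonneg (u - 1)
    linarith

lemma abs_one_sub_exp (x : ℝ) :
    ‖1 - Complex.exp (((2 * x : ℝ) : ℂ) * Complex.I)‖ = 2 * |Real.sin x| := by
  have ha := Complex.exp_ne_zero ((x : ℝ) * Complex.I)
  have h1 : (1 : ℂ) - Complex.exp (((2 * x : ℝ) : ℂ) * Complex.I)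
      = -Complex.exp ((x : ℝ) * Complex.I) * (2 * Complex.I * Complex.sin x) := by
    rw [Complex.sin]
    have h2 : (((2 * x : ℝ) : ℂ) * Complex.I) = (x : ℝ) * Complex.I + (x : ℝ) * Complex.I := by
      push_cast; ring
    rw [h2, Complex.exp_add, show (-(x:ℂ)) * Complex.I = -((x:ℂ)*Complex.I) from by ring, Complex.exp_neg]
    field_simp
    ring_nf
    rw [Complex.I_sq]
    ring
  rw [h1, norm_mul, norm_mul, norm_mul, norm_neg, Complex.norm_exp_ofReal_mul_I,
    ← Complex.ofReal_sin, show ‖((Real.sin x : ℝ) : ℂ)‖ = |Real.sin x| from RCLike.norm_ofReal _]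
  simp

set_option maxHeartbeats 1000000 in
/-- Parabolic explosion asymptotics. Let `p/q` be a rational in lowest terms with
`P_{p/q}^{∘q}(z) = z + A z^{q+1} + O(z^{q+2})`, `A ≠ 0`, and
`P_{p/q+ε}^{∘q}(z) = e^{2πiqε} z + A z^{q+1} + O(ε z²)`. Let `z_ε → 0` be a point of the
exploding `q`-cycle (`P_{p/q+ε}^{∘q}(z_ε) = z_ε`, `z_ε ≠ 0`). Then
`z_ε^q = (1 − e^{2πiqε})/A · (1 + O(z_ε))`, hence `z_ε = O(ε^{1/q})` and
`log |z_ε| = (1/q) log|2πqε/A| + O(ε^{1/q})`. -/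
theorem exploding_cycle_asymptotics (p : ℤ) (q : ℕ) (hq : 1 ≤ q)
    (hcop : Int.gcd p (q : ℤ) = 1) (A : ℂ) (hA : A ≠ 0)
    (hExp : (fun z : ℂ => (Pquad ((p : ℝ) / (q : ℝ)))^[q] z - z - A * z ^ (q + 1))
      =O[nhds 0] fun z : ℂ => z ^ (q + 2))
    (hExp2 : ∃ C > (0 : ℝ), ∃ ρ > (0 : ℝ), ∀ (ε : ℝ) (z : ℂ), |ε| < ρ → ‖z‖ < ρ →
      ‖((Pquad ((p : ℝ) / (q : ℝ) + ε))^[q] z -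
          Complex.exp (2 * (Real.pi : ℂ) * Complex.I * ((q : ℂ) * (ε : ℂ))) * z -
          A * z ^ (q + 1))‖ ≤ C * |ε| * ‖z‖ ^ 2)
    (z : ℝ → ℂ)
    (hz0 : Tendsto z (nhdsWithin (0 : ℝ) {0}ᶜ) (nhds 0))
    (hzne : ∀ᶠ ε in nhdsWithin (0 : ℝ) {0}ᶜ, z ε ≠ 0)
    (hper : ∀ᶠ ε in nhdsWithin (0 : ℝ) {0}ᶜ,
      (Pquad ((p : ℝ) / (q : ℝ) + ε))^[q] (z ε) = z ε) :
    ((fun ε : ℝ => (z ε) ^ q * A /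
          (1 - Complex.exp (2 * (Real.pi : ℂ) * Complex.I * ((q : ℂ) * (ε : ℂ)))) - 1)
        =O[nhdsWithin (0 : ℝ) {0}ᶜ] z) ∧
    (z =O[nhdsWithin (0 : ℝ) {0}ᶜ] fun ε : ℝ => |ε| ^ ((1 : ℝ) / q)) ∧
    ((fun ε : ℝ => Real.log (‖z ε‖) -
          (1 / (q : ℝ)) * Real.log (2 * Real.pi * (q : ℝ) * |ε| / ‖A‖))
        =O[nhdsWithin (0 : ℝ) {0}ᶜ] fun ε : ℝ => |ε| ^ ((1 : ℝ) / q)) := by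
  obtain ⟨C, hC, ρ, hρ, hB⟩ := hExp2
  have hq0 : (0:ℝ) < (q:ℝ) := by exact_mod_cast hq
  have hq1 : (1:ℝ) ≤ (q:ℝ) := by exact_mod_cast hq
  have hπ : (0:ℝ) < Real.pi := Real.pi_pos
  have hπ3 : (3:ℝ) < Real.pi := Real.pi_gt_three
  have hπq : (0:ℝ) < Real.pi * q := by positivity
  have hAbs : 0 < ‖A‖ := by
    simpa [norm_pos_iff] using hA
  set c₂ : ℝ := (3 * Real.pi * q / ‖A‖) ^ ((1:ℝ)/q) with hc2def
  have hc2pos : 0 < c₂ := Real.rpow_pos_of_pos (by positivity) _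
  set c₃ : ℝ := (1/(q:ℝ)) * ((C/q) * c₂ + Real.pi^2 * q^2 / 2) with hc3def
  -- eventual smallness of ε
  have hδ : (0:ℝ) < min ρ (1/(Real.pi*q)) := lt_min hρ (by positivity)
  have hsmall : ∀ᶠ ε : ℝ in nhdsWithin (0:ℝ) {0}ᶜ, |ε| < min ρ (1/(Real.pi*q)) := by
    apply eventually_nhdsWithin_of_eventually_nhds
    have := Metric.ball_mem_nhds (0:ℝ) hδ
    filter_upwards [this] with ε hε
    simpa [Real.dist_eq] using hε
  have hεne : ∀ᶠ ε : ℝ in nhdsWithin (0:ℝ) {0}ᶜ, ε ≠ 0 := by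
    filter_upwards [eventually_mem_nhdsWithin] with ε hε
    simpa using hε
  have hzsmall : ∀ᶠ ε : ℝ in nhdsWithin (0:ℝ) {0}ᶜ,
      ‖z ε‖ < min ρ ((q:ℝ)/C) := by
    have hr : (0:ℝ) < min ρ ((q:ℝ)/C) := lt_min hρ (by positivity)
    have := hz0 (Metric.ball_mem_nhds (0:ℂ) hr)
    filter_upwards [this] with ε hε
    simpa [Complex.dist_eq] using hε
  -- the big pointwise estimate
  have main : ∀ᶠ ε : ℝ in nhdsWithin (0:ℝ) {0}ᶜ,
      ‖((z ε) ^ q * A /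
          (1 - Complex.exp (2 * (Real.pi : ℂ) * Complex.I * ((q : ℂ) * (ε : ℂ)))) - 1)‖
        ≤ C/(2*q) * ‖z ε‖
      ∧ ‖z ε‖ ≤ c₂ * |ε| ^ ((1:ℝ)/q)
      ∧ |Real.log (‖z ε‖) -
          (1/(q:ℝ)) * Real.log (2 * Real.pi * q * |ε| / ‖A‖)|
          ≤ c₃ * |ε| ^ ((1:ℝ)/q) := by
    filter_upwards [hsmall, hεne, hzsmall, hzne, hper] with ε hεδ hne hzδ hwne hfix
    set E : ℂ := Complex.exp (2 * (Real.pi : ℂ) * Complex.I * ((q : ℂ) * (ε : ℂ))) with hEdef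
    set a : ℝ := ‖z ε‖ with hadef
    have hapos : 0 < a := by simpa [hadef, norm_pos_iff] using hwne
    have hεpos : 0 < |ε| := abs_pos.mpr hne
    have hερ : |ε| < ρ := lt_of_lt_of_le hεδ (min_le_left _ _)
    have hε2 : |ε| < 1/(Real.pi*q) := lt_of_lt_of_le hεδ (min_le_right _ _)
    set y : ℝ := Real.pi * q * |ε| with hydef
    have hy0 : 0 < y := by positivity
    have hy1 : y ≤ 1 := by
      rw [hydef]
      calc Real.pi * q * |ε| ≤ Real.pi * q * (1/(Real.pi*q)) := by
            apply mul_le_mul_of_nonneg_left hε2.le (by positivity)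
        _ = 1 := by field_simp
    obtain ⟨hsl, hsu⟩ := sin_bounds hy0.le hy1
    set s : ℝ := Real.sin y with hsdef
    have hy3 : y^3 ≤ y := by
      nlinarith [mul_nonneg (mul_nonneg hy0.le (by linarith : (0:ℝ) ≤ 1 - y))
        (by linarith : (0:ℝ) ≤ 1 + y)]
    have hslb : y/2 ≤ s := by linarith
    have hspos : 0 < s := by linarith
    have habsE : ‖1 - E‖ = 2 * s := by
      have h0 : (2 * (Real.pi : ℂ) * Complex.I * ((q : ℂ) * (ε : ℂ)))
          = ((2 * (Real.pi * q * ε) : ℝ) : ℂ) * Complex.I := by push_cast; ring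
      have habsx : |Real.pi * q * ε| = y := by
        rw [hydef, abs_mul, _root_.abs_of_nonneg hπq.le]
      rw [hEdef, h0, abs_one_sub_exp, abs_sin_eq _ (by rw [habsx]; exact hy1), habsx]
    have hEne : (1:ℂ) - E ≠ 0 := by
      intro h
      rw [h] at habsE
      simp at habsE
      linarith
    -- apply the bound
    have h1 := hB ε (z ε) hερ (lt_of_lt_of_le hzδ (min_le_left _ _))
    rw [hfix] at h1
    have h2 : z ε - E * z ε - A * z ε ^ (q+1) = -(z ε * (A * z ε ^ q + E - 1)) := by
      rw [pow_succ]; ring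
    rw [h2, norm_neg, norm_mul] at h1
    have h3 : ‖A * z ε ^ q + E - 1‖ ≤ C * |ε| * a := by
      have h1' : a * ‖A * z ε ^ q + E - 1‖ ≤ a * (C * |ε| * a) := by
        calc a * ‖A * z ε ^ q + E - 1‖ ≤ C * |ε| * a ^ 2 := h1
          _ = a * (C * |ε| * a) := by ring
      exact le_of_mul_le_mul_left h1' hapos
    have h4 : z ε ^ q * A / (1 - E) - 1 = (A * z ε ^ q + E - 1) / (1 - E) := by
      field_simp [hEne]
      ring
    have h2s : 2 * q * |ε| ≤ 2 * s := by
      nlinarith [mul_nonneg (mul_nonneg (by linarith : (0:ℝ) ≤ Real.pi - 2) hq0.le) hεpos.le]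
    have hP1 : ‖z ε ^ q * A / (1 - E) - 1‖ ≤ C/(2*q) * a := by
      rw [h4, norm_div, habsE]
      calc ‖A * z ε ^ q + E - 1‖ / (2*s)
          ≤ (C * |ε| * a) / (2 * q * |ε|) := by
            apply div_le_div₀ (by positivity) h3 (by positivity) h2s
        _ = C/(2*q) * a := by field_simp
    -- part 2
    have haq : a < q/C := lt_of_lt_of_le hzδ (min_le_right _ _)
    have hhalf : C/(2*q) * a ≤ 1/2 := by
      have hCa : a * C ≤ (q:ℝ) := (le_div_iff₀ hC).mp haq.le
      rw [div_mul_eq_mul_div, div_le_div_iff₀ (by positivity) (by norm_num)]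
      linarith
    have h7 : ‖z ε ^ q * A / (1 - E)‖ ≤ 3/2 := by
      calc ‖z ε ^ q * A / (1 - E)‖
          = ‖(z ε ^ q * A / (1 - E) - 1) + 1‖ := by congr 1; ring
        _ ≤ ‖z ε ^ q * A / (1 - E) - 1‖ + ‖(1:ℂ)‖ :=
            norm_add_le _ _
        _ ≤ 1/2 + 1 := by rw [norm_one]; linarith
        _ = 3/2 := by norm_num
    have habsquot : ‖z ε ^ q * A / (1 - E)‖ = a^q * ‖A‖ / (2*s) := by
      rw [norm_div, norm_mul, norm_pow, habsE, hadef]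
    have h8 : a^q * ‖A‖ ≤ 3 * Real.pi * q * |ε| := by
      rw [habsquot] at h7
      rw [div_le_iff₀ (by positivity)] at h7
      calc a^q * ‖A‖ ≤ 3/2 * (2*s) := h7
        _ = 3 * s := by ring
        _ ≤ 3 * y := by linarith
        _ = 3 * Real.pi * q * |ε| := by rw [hydef]; ring
    have h9 : a^q ≤ (3 * Real.pi * q / ‖A‖) * |ε| := by
      rw [div_mul_eq_mul_div, le_div_iff₀ hAbs]
      linarith
    have hP2 : a ≤ c₂ * |ε| ^ ((1:ℝ)/q) := by
      have e1 : a = ((a^q : ℝ)) ^ ((1:ℝ)/q) := by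
        rw [← Real.rpow_natCast a q, ← Real.rpow_mul hapos.le]
        rw [mul_one_div, div_self (by positivity : (q:ℝ) ≠ 0), Real.rpow_one]
      rw [e1, hc2def, ← Real.mul_rpow (by positivity) hεpos.le]
      exact Real.rpow_le_rpow (by positivity) h9 (by positivity)
    -- part 3
    set u : ℝ := a^q * ‖A‖ / (2*s) with hudef
    set v : ℝ := s / y with hvdef
    have hupos : 0 < u := by positivity
    have hvpos : 0 < v := by positivity
    have hu1 : |u - 1| ≤ C/(2*q) * a := by
      have := abs_norm_sub_norm_le (z ε ^ q * A / (1 - E)) 1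
      rw [norm_one, habsquot] at this
      exact le_trans this hP1
    have huhalf : 1/2 ≤ u := by
      have := abs_le.mp hu1
      linarith [this.1, hhalf]
    have hv1 : |v - 1| ≤ y^2/4 := by
      have hv2 : v - 1 = (s - y)/y := by rw [hvdef, div_sub_one hy0.ne']
      rw [hv2, abs_div, _root_.abs_of_pos hy0, div_le_iff₀ hy0]
      rw [abs_of_nonpos (by linarith)]
      nlinarith
    have hvhalf : 1/2 ≤ v := by
      rw [hvdef, le_div_iff₀ hy0]; linarith
    have hε1 : |ε| ≤ 1 := by
      have hle : 1/(Real.pi*q) ≤ 1 := by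
        rw [div_le_one hπq]
        have h3q := mul_le_mul hπ3.le hq1 zero_le_one hπ.le
        linarith
      linarith
    have hεsq : |ε|^2 ≤ |ε| ^ ((1:ℝ)/q) := by
      have h1q : (1:ℝ)/q ≤ 2 := by
        rw [div_le_iff₀ hq0]; linarith
      calc |ε|^2 = |ε| ^ ((2:ℕ):ℝ) := by rw [Real.rpow_natCast]
        _ ≤ |ε| ^ ((1:ℝ)/q) := Real.rpow_le_rpow_of_exponent_ge hεpos hε1 (by exact_mod_cast h1q)
    have hlogu : |Real.log u| ≤ (C/q) * c₂ * |ε| ^ ((1:ℝ)/q) := by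
      calc |Real.log u| ≤ 2 * |u - 1| := abs_log_le huhalf
        _ ≤ 2 * (C/(2*q) * a) := by linarith
        _ = (C/q) * a := by field_simp
        _ ≤ (C/q) * (c₂ * |ε| ^ ((1:ℝ)/q)) := by
            apply mul_le_mul_of_nonneg_left hP2 (by positivity)
        _ = (C/q) * c₂ * |ε| ^ ((1:ℝ)/q) := by ring
    have hlogv : |Real.log v| ≤ Real.pi^2 * q^2 / 2 * |ε| ^ ((1:ℝ)/q) := by
      calc |Real.log v| ≤ 2 * |v - 1| := abs_log_le hvhalf
        _ ≤ 2 * (y^2/4) := by linarith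
        _ = Real.pi^2 * q^2 * |ε|^2 / 2 := by rw [hydef]; ring
        _ ≤ Real.pi^2 * q^2 * |ε| ^ ((1:ℝ)/q) / 2 := by
            have := mul_le_mul_of_nonneg_left hεsq (by positivity : (0:ℝ) ≤ Real.pi^2 * q^2)
            linarith
        _ = Real.pi^2 * q^2 / 2 * |ε| ^ ((1:ℝ)/q) := by ring
    have huv : u * v = a^q * ‖A‖ / (2 * Real.pi * q * |ε|) := by
      rw [hudef, hvdef, hydef]
      field_simp
    have hL1 : Real.log (u*v)
        = q * Real.log a + Real.log (‖A‖) - Real.log (2 * Real.pi * q * |ε|) := by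
      rw [huv, Real.log_div (by positivity) (by positivity),
        Real.log_mul (by positivity) hAbs.ne', Real.log_pow]
    have hL2 : Real.log (2 * Real.pi * q * |ε| / ‖A‖)
        = Real.log (2 * Real.pi * q * |ε|) - Real.log (‖A‖) :=
      Real.log_div (by positivity) hAbs.ne'
    have hid : Real.log a - (1/(q:ℝ)) * Real.log (2 * Real.pi * q * |ε| / ‖A‖)
        = (1/(q:ℝ)) * (Real.log u + Real.log v) := by
      rw [← Real.log_mul hupos.ne' hvpos.ne', hL1, hL2]
      field_simp
      ring
    refine ⟨hP1, hP2, ?_⟩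
    rw [hid, hc3def]
    rw [abs_mul, _root_.abs_of_pos (by positivity : (0:ℝ) < 1/(q:ℝ))]
    calc (1/(q:ℝ)) * |Real.log u + Real.log v|
        ≤ (1/(q:ℝ)) * (|Real.log u| + |Real.log v|) := by
          apply mul_le_mul_of_nonneg_left (abs_add_le _ _) (by positivity)
      _ ≤ (1/(q:ℝ)) * ((C/q) * c₂ * |ε| ^ ((1:ℝ)/q) + Real.pi^2 * q^2 / 2 * |ε| ^ ((1:ℝ)/q)) := by
          apply mul_le_mul_of_nonneg_left (by linarith) (by positivity)
      _ = (1/(q:ℝ)) * ((C/q) * c₂ + Real.pi^2 * q^2 / 2) * |ε| ^ ((1:ℝ)/q) := by ring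
  -- conclude
  have hnorm : ∀ ε : ℝ, ‖|ε| ^ ((1:ℝ)/q)‖ = |ε| ^ ((1:ℝ)/q) := fun ε =>
    Real.norm_of_nonneg (Real.rpow_nonneg (abs_nonneg ε) _)
  refine ⟨?_, ?_, ?_⟩
  · rw [Asymptotics.isBigO_iff]
    refine ⟨C/(2*q), ?_⟩
    filter_upwards [main] with ε h
    exact h.1
  · rw [Asymptotics.isBigO_iff]
    refine ⟨c₂, ?_⟩
    filter_upwards [main] with ε h
    rw [hnorm]
    exact h.2.1
  · rw [Asymptotics.isBigO_iff]
    refine ⟨c₃, ?_⟩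
    filter_upwards [main] with ε h
    rw [Real.norm_eq_abs, hnorm]
    exact h.2.2
end

section
/- Let F: ℍ → ℂ be holomorphic with F ∘ T = T ∘ F where T(Z) = Z + 1, and suppose F(Z) − Z − α → 0 as Im Z → +∞, with |F(Z) − Z − α| ≤ δα on ℍ. Then in fact |F(Z) − Z − α| ≤ δα·e^{−2π Im Z} for all Z ∈ ℍ. -/
open Complex Filter

/-- Let `F` be holomorphic on the upper half-plane `ℍ`, commuting with `T(Z) = Z + 1`, with
`F(Z) − Z − α → 0` as `Im Z → +∞` and `|F(Z) − Z − α| ≤ δα` on `ℍ`. Then in fact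
`|F(Z) − Z − α| ≤ δα e^{−2π Im Z}` on `ℍ`. -/
theorem periodic_perturbation_exponential_decay (F : ℂ → ℂ) (α δ : ℝ) (hα : 0 < α)
    (hδ : 0 < δ)
    (hol : DifferentiableOn ℂ F {z : ℂ | 0 < z.im})
    (hcomm : ∀ Z : ℂ, 0 < Z.im → F (Z + 1) = F Z + 1)
    (hlim : Tendsto (fun Z : ℂ => F Z - Z - (α : ℂ)) (comap Complex.im atTop) (nhds 0))
    (hbound : ∀ Z : ℂ, 0 < Z.im → ‖F Z - Z - (α : ℂ)‖ ≤ δ * α) :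
    ∀ Z : ℂ, 0 < Z.im →
      ‖F Z - Z - (α : ℂ)‖ ≤ δ * α * Real.exp (-2 * Real.pi * Z.im) := by
  set u : ℂ → ℂ := fun Z => if 0 < Z.im then F Z - Z - (α : ℂ) else 0 with hu
  have hopen : IsOpen {z : ℂ | 0 < z.im} := isOpen_lt continuous_const Complex.continuous_im
  have hueq : ∀ Z : ℂ, 0 < Z.im → u Z = F Z - Z - (α : ℂ) := fun Z hZ => if_pos hZ
  have hper : Function.Periodic u 1 := by
    intro Z
    by_cases hZ : 0 < Z.im
    · have hZ1 : 0 < (Z + 1).im := by simpa using hZ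
      rw [hueq _ hZ1, hueq _ hZ, hcomm Z hZ]; ring
    · have hZ1 : ¬ 0 < (Z + 1).im := by simpa using hZ
      simp [hu, hZ, hZ1]
  have hmem : {Z : ℂ | 0 < Z.im} ∈ comap Complex.im atTop :=
    Filter.preimage_mem_comap (Ioi_mem_atTop 0)
  have hudiff : ∀ Z : ℂ, 0 < Z.im → DifferentiableAt ℂ u Z := by
    intro Z hZ
    have h1 : DifferentiableAt ℂ (fun W => F W - W - (α : ℂ)) Z := by
      have := (hol.differentiableAt (hopen.mem_nhds hZ))
      fun_prop
    refine h1.congr_of_eventuallyEq ?_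
    filter_upwards [hopen.mem_nhds hZ] with W hW using (hueq W hW)
  have hzero : ZeroAtFilter (comap Complex.im atTop) u := by
    refine hlim.congr' ?_
    filter_upwards [hmem] with W hW using (hueq W hW).symm
  have hhol : ∀ᶠ Z in comap Complex.im atTop, DifferentiableAt ℂ u Z := by
    filter_upwards [hmem] with W hW using hudiff W hW
  set g := Function.Periodic.cuspFunction 1 u with hg
  have hg0 : g 0 = 0 := Function.Periodic.cuspFunction_zero_of_zero_at_inf one_pos hzero
  have him : ∀ q : ℂ, q ≠ 0 → ‖q‖ < 1 →
      0 < (Function.Periodic.invQParam 1 q).im := by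
    intro q hq hq1
    rw [Function.Periodic.im_invQParam]
    have hlog : Real.log (‖q‖) < 0 :=
      Real.log_neg (norm_pos_iff.mpr hq) hq1
    have hpi : (0:ℝ) < Real.pi := Real.pi_pos
    have : 0 < (-(1:ℝ) / (2 * Real.pi)) * Real.log (‖q‖) := by
      apply mul_pos_of_neg_of_neg _ hlog
      rw [div_neg_iff]; right; constructor <;> [norm_num; positivity]
    simpa using this
  have hgdiff : DifferentiableOn ℂ g (Metric.ball 0 1) := by
    intro q hq
    rcases eq_or_ne q 0 with rfl | hq0
    · exact (Function.Periodic.differentiableAt_cuspFunction_zero one_pos hper hhol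
        hzero.boundedAtFilter).differentiableWithinAt
    · have hq1 : ‖q‖ < 1 := by simpa [Complex.dist_eq] using hq
      have hz := him q hq0 hq1
      have hda : DifferentiableAt ℂ g q := by
        have := Function.Periodic.differentiableAt_cuspFunction one_ne_zero hper
          (hudiff _ hz)
        rwa [Function.Periodic.qParam_right_inv one_ne_zero hq0] at this
      exact hda.differentiableWithinAt
  have hgbound : ∀ q : ℂ, q ∈ Metric.ball (0:ℂ) 1 → ‖g q‖ ≤ δ * α := by
    intro q hq
    rcases eq_or_ne q 0 with rfl | hq0
    · rw [hg0, norm_zero]; positivity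
    · have hq1 : ‖q‖ < 1 := by simpa [Complex.dist_eq] using hq
      have hz := him q hq0 hq1
      rw [hg, Function.Periodic.cuspFunction_eq_of_nonzero _ _ hq0]
      rw [hueq _ hz]
      exact hbound _ hz
  have hschwarz : ∀ q : ℂ, ‖q‖ < 1 → ‖g q‖ ≤ δ * α * ‖q‖ := by
    intro q hq
    have key : ∀ ε : ℝ, 0 < ε → ‖g q‖ ≤ (δ * α + ε) * ‖q‖ := by
      intro ε hε
      have hmaps : Set.MapsTo g (Metric.ball 0 1) (Metric.ball (g 0) (δ * α + ε)) := by
        intro w hw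
        rw [hg0, Metric.mem_ball, Complex.dist_eq, sub_zero]
        exact lt_of_le_of_lt (hgbound w hw) (by linarith)
      have hd := Complex.dist_le_div_mul_dist_of_mapsTo_ball hgdiff (hmaps.mono_right Metric.ball_subset_closedBall)
        (Metric.mem_ball.mpr (by simpa [Complex.dist_eq] using hq))
      rw [hg0] at hd
      simpa [Complex.dist_eq, div_one] using hd
    refine le_of_forall_pos_le_add fun ε hε => ?_
    calc ‖g q‖ ≤ (δ * α + ε) * ‖q‖ := key ε hε
      _ = δ * α * ‖q‖ + ε * ‖q‖ := by ring
      _ ≤ δ * α * ‖q‖ + ε := by nlinarith [norm_nonneg q]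
  intro Z hZ
  have hq : ‖Function.Periodic.qParam 1 Z‖ = Real.exp (-2 * Real.pi * Z.im) := by
    rw [Function.Periodic.norm_qParam]; norm_num
  have hq1 : ‖Function.Periodic.qParam 1 Z‖ < 1 := by
    rw [hq]; apply Real.exp_lt_one_iff.mpr; nlinarith [Real.pi_pos]
  have hfin := hschwarz _ hq1
  rw [hg, Function.Periodic.eq_cuspFunction one_ne_zero hper Z, hueq Z hZ, hq] at hfin
  exact hfin
end
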